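/- Let X be a positive definite matrix of the block diagonal form X = diag[X₁,…,X_s, x₁ I_{m₁}, …, x_f I_{m_f}] with X_i positive definite matrices and x_j positive reals, and suppose M* X M - X ≺ 0 (negative definite). Then for every Δ of the block form diag[δ₁ I_{n₁},…,δ_s I_{n_s}, Δ₁,…,Δ_f] with |δ_i| ≤ 1 and ‖Δ_j‖ ≤ 1, the matrix I - Δ M is invertible. -/

import Mathlib

open Matrix
open scoped ComplexOrder

namespace StructuredSGAux

variable {ι : Type*} [Fintype ι] [DecidableEq ι] {κ : ι → Type*} [∀ i, Fintype (κ i)]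

lemma bd_mulVec (Ms : ∀ i, Matrix (κ i) (κ i) ℂ) (b : (Σ i, κ i) → ℂ) (i : ι) (k : κ i) :
    (Matrix.blockDiagonal' Ms *ᵥ b) ⟨i, k⟩ = (Ms i *ᵥ fun k' => b ⟨i, k'⟩) k := by
  simp only [Matrix.mulVec, dotProduct]
  rw [← Finset.univ_sigma_univ, Finset.sum_sigma]
  rw [Finset.sum_eq_single i (fun i' _ hne => Finset.sum_eq_zero fun k' _ => by
        rw [Matrix.blockDiagonal'_apply_ne _ _ _ (Ne.symm hne), zero_mul])
      (fun h => absurd (Finset.mem_univ i) h)]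
  simp [Matrix.mulVec, dotProduct]

omit [DecidableEq ι] in
lemma sigma_dot (a v : (Σ i, κ i) → ℂ) :
    a ⬝ᵥ v = ∑ i, (fun k => a ⟨i, k⟩) ⬝ᵥ (fun k => v ⟨i, k⟩) := by
  simp only [dotProduct]
  rw [← Finset.univ_sigma_univ, Finset.sum_sigma]

lemma quad_bd (Ms : ∀ i, Matrix (κ i) (κ i) ℂ) (a b : (Σ i, κ i) → ℂ) :
    star a ⬝ᵥ (Matrix.blockDiagonal' Ms *ᵥ b)
      = ∑ i, star (fun k => a ⟨i, k⟩) ⬝ᵥ (Ms i *ᵥ fun k' => b ⟨i, k'⟩) := by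
  rw [sigma_dot]
  refine Finset.sum_congr rfl fun i _ => ?_
  simp only [dotProduct, Pi.star_apply, bd_mulVec]

lemma contraction {k : Type*} [Fintype k] [DecidableEq k] (Δ : Matrix k k ℂ)
    (h : ‖Matrix.toEuclideanCLM (𝕜 := ℂ) Δ‖ ≤ 1) (y : k → ℂ) :
    star (Δ *ᵥ y) ⬝ᵥ (Δ *ᵥ y) ≤ star y ⬝ᵥ y := by
  have h1 := EuclideanSpace.inner_toLp_toLp (𝕜 := ℂ) (Δ *ᵥ y) (Δ *ᵥ y)
  have h2 := EuclideanSpace.inner_toLp_toLp (𝕜 := ℂ) y y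
  rw [dotProduct_comm] at h1 h2
  set T := Matrix.toEuclideanCLM (𝕜 := ℂ) Δ
  set Y : EuclideanSpace ℂ k := WithLp.toLp 2 y with hY
  have hTY : T Y = WithLp.toLp 2 (Δ *ᵥ y) :=
    Matrix.toEuclideanCLM_toLp Δ y
  rw [← h1, ← h2, ← hTY]
  rw [inner_self_eq_norm_sq_to_K, inner_self_eq_norm_sq_to_K]
  have hn : ‖T Y‖ ≤ ‖Y‖ := by
    calc ‖T Y‖ ≤ ‖T‖ * ‖Y‖ := T.le_opNorm Y
    _ ≤ 1 * ‖Y‖ := by gcongr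
    _ = ‖Y‖ := one_mul _
  have := pow_le_pow_left₀ (norm_nonneg (T Y)) hn 2
  exact_mod_cast this

end StructuredSGAux

theorem structured_small_gain (s f : ℕ) (n : Fin s → ℕ) (m : Fin f → ℕ)
    (M : Matrix ((Σ i : Fin s, Fin (n i)) ⊕ (Σ j : Fin f, Fin (m j)))
                ((Σ i : Fin s, Fin (n i)) ⊕ (Σ j : Fin f, Fin (m j))) ℂ)
    (Xs : ∀ i : Fin s, Matrix (Fin (n i)) (Fin (n i)) ℂ)
    (xv : Fin f → ℝ)
    (hXs : ∀ i, (Xs i).PosDef) (hxv : ∀ j, 0 < xv j)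
    (X : Matrix ((Σ i : Fin s, Fin (n i)) ⊕ (Σ j : Fin f, Fin (m j)))
                ((Σ i : Fin s, Fin (n i)) ⊕ (Σ j : Fin f, Fin (m j))) ℂ)
    (hX : X = Matrix.fromBlocks (Matrix.blockDiagonal' Xs) 0 0
        (Matrix.blockDiagonal' fun j => ((xv j : ℂ)) • (1 : Matrix (Fin (m j)) (Fin (m j)) ℂ)))
    (hStein : (-(Mᴴ * X * M - X)).PosDef) :
    ∀ (δ : Fin s → ℂ) (Δs : ∀ j : Fin f, Matrix (Fin (m j)) (Fin (m j)) ℂ),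
      (∀ i, ‖δ i‖ ≤ 1) →
      (∀ j, ‖Matrix.toEuclideanCLM (𝕜 := ℂ) (Δs j)‖ ≤ 1) →
      IsUnit ((1 : Matrix ((Σ i : Fin s, Fin (n i)) ⊕ (Σ j : Fin f, Fin (m j)))
                          ((Σ i : Fin s, Fin (n i)) ⊕ (Σ j : Fin f, Fin (m j))) ℂ)
        - (Matrix.fromBlocks
            (Matrix.blockDiagonal' fun i => (δ i) • (1 : Matrix (Fin (n i)) (Fin (n i)) ℂ))
            0 0 (Matrix.blockDiagonal' Δs)) * M) := by
  intro δ Δs hδ hΔ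
  classical
  by_contra hA
  set Dδ := Matrix.blockDiagonal' fun i => (δ i) • (1 : Matrix (Fin (n i)) (Fin (n i)) ℂ)
    with hDδ
  set BΔ := Matrix.blockDiagonal' Δs with hBΔ
  set Δfull := Matrix.fromBlocks Dδ 0 0 BΔ with hΔfull
  rw [Matrix.isUnit_iff_isUnit_det, isUnit_iff_ne_zero, not_not] at hA
  obtain ⟨v, hv0, hveq0⟩ := Matrix.exists_mulVec_eq_zero_iff.mpr hA
  set w := M *ᵥ v with hw
  have hvw : v = Δfull *ᵥ w := by
    have h := hveq0
    rw [Matrix.sub_mulVec, Matrix.one_mulVec, sub_eq_zero] at h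
    rw [h, ← Matrix.mulVec_mulVec, ← hw]
  -- Stein strict inequality
  have hstein := hStein.dotProduct_mulVec_pos hv0
  have hexp : star w ⬝ᵥ (X *ᵥ w) = star v ⬝ᵥ ((Mᴴ * X * M) *ᵥ v) := by
    rw [hw]
    simp only [Matrix.star_mulVec, dotProduct_mulVec, Matrix.vecMul_vecMul]
  have hlt : star w ⬝ᵥ (X *ᵥ w) < star v ⬝ᵥ (X *ᵥ v) := by
    rw [hexp]
    have hre : star v ⬝ᵥ ((-(Mᴴ * X * M - X)) *ᵥ v)
        = star v ⬝ᵥ (X *ᵥ v) - star v ⬝ᵥ ((Mᴴ * X * M) *ᵥ v) := by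
      rw [Matrix.neg_mulVec, Matrix.sub_mulVec]
      simp [dotProduct_neg, dotProduct_sub]
    rw [hre] at hstein
    exact sub_pos.mp hstein
  -- decompose w and v into blocks
  set a := fun k => w (Sum.inl k) with ha
  set b := fun k => w (Sum.inr k) with hb
  have hwelim : w = Sum.elim a b := by funext x; cases x <;> rfl
  have hvelim : v = Sum.elim (Dδ *ᵥ a) (BΔ *ᵥ b) := by
    rw [hvw, hwelim, hΔfull, Matrix.fromBlocks_mulVec]
    simp
  -- quadratic form of X on a block vector
  have hquad : ∀ (u₁ : (Σ i : Fin s, Fin (n i)) → ℂ) (u₂ : (Σ j : Fin f, Fin (m j)) → ℂ),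
      star (Sum.elim u₁ u₂) ⬝ᵥ (X *ᵥ Sum.elim u₁ u₂)
        = (∑ i, star (fun k => u₁ ⟨i, k⟩) ⬝ᵥ (Xs i *ᵥ fun k' => u₁ ⟨i, k'⟩))
          + ∑ j, (xv j : ℂ) * (star (fun k => u₂ ⟨j, k⟩) ⬝ᵥ fun k' => u₂ ⟨j, k'⟩) := by
    intro u₁ u₂
    rw [hX, Matrix.fromBlocks_mulVec]
    simp only [Matrix.zero_mulVec, add_zero, zero_add, Sum.elim_comp_inl, Sum.elim_comp_inr]
    rw [Function.star_sumElim, sumElim_dotProduct_sumElim,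
      StructuredSGAux.quad_bd, StructuredSGAux.quad_bd]
    congr 1
    refine Finset.sum_congr rfl fun j _ => ?_
    rw [Matrix.smul_mulVec, Matrix.one_mulVec, dotProduct_smul, smul_eq_mul]
  -- key structural inequality
  have hkey : star v ⬝ᵥ (X *ᵥ v) ≤ star w ⬝ᵥ (X *ᵥ w) := by
    rw [hvelim, hwelim, hquad, hquad]
    refine add_le_add (Finset.sum_le_sum fun i _ => ?_) (Finset.sum_le_sum fun j _ => ?_)
    · have hDa : (fun k => (Dδ *ᵥ a) ⟨i, k⟩) = δ i • (fun k => a ⟨i, k⟩) := by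
        funext k
        rw [hDδ, StructuredSGAux.bd_mulVec, Matrix.smul_mulVec, Matrix.one_mulVec]
      rw [hDa, star_smul, Matrix.mulVec_smul, smul_dotProduct,
        dotProduct_smul, smul_eq_mul, smul_eq_mul, ← mul_assoc]
      have hQ : 0 ≤ star (fun k => a ⟨i, k⟩) ⬝ᵥ (Xs i *ᵥ fun k' => a ⟨i, k'⟩) :=
        (hXs i).posSemidef.dotProduct_mulVec_nonneg _
      have hδ2 : star (δ i) * δ i ≤ 1 := by
        rw [Complex.star_def, ← Complex.normSq_eq_conj_mul_self]
        have h1 : Complex.normSq (δ i) ≤ 1 := by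
          have := hδ i
          nlinarith [Complex.sq_norm (δ i), norm_nonneg (δ i)]
        calc (Complex.normSq (δ i) : ℂ) ≤ ((1 : ℝ) : ℂ) := by exact_mod_cast h1
          _ = 1 := by norm_num
      exact mul_le_of_le_one_left hQ hδ2
    · have hBb : (fun k => (BΔ *ᵥ b) ⟨j, k⟩) = Δs j *ᵥ (fun k' => b ⟨j, k'⟩) := by
        funext k
        rw [hBΔ, StructuredSGAux.bd_mulVec]
      rw [hBb]
      have hc := StructuredSGAux.contraction (Δs j) (hΔ j) (fun k' => b ⟨j, k'⟩)
      have hx : (0 : ℂ) ≤ (xv j : ℂ) := by exact_mod_cast (hxv j).le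
      exact mul_le_mul_of_nonneg_left hc hx
  exact hlt.not_ge hkey
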